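/- Given two non-negative integers n and k with n ≥ k > 1, a non-decreasing sequence S = [s₁, s₂, ..., s_n] of non-negative integers is the score sequence of some k-hypertournament on n vertices if and only if for each j with 1 ≤ j ≤ n, ∑_{i=1}^{j} s_i ≥ j·C(n−1,k−1) + C(n−j,k) − C(n,k), with equality when j = n (where C(p,q) denotes the binomial coefficient, taken to be 0 when p < q). -/

import Mathlib

/-- A k-hypertournament on the vertex set `Fin n`: a set of arcs, each a
duplicate-free k-tuple (list) of vertices, such that for every k-subset `S` of
the vertices there is exactly one arc whose set of entries is `S`. -/
structure Hypertournament (n k : ℕ) where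
  arcs : Finset (List (Fin n))
  nodup : ∀ e ∈ arcs, e.Nodup
  len : ∀ e ∈ arcs, e.length = k
  complete : ∀ S : Finset (Fin n), S.card = k → ∃! e, e ∈ arcs ∧ e.toFinset = S

/-- The score of a vertex `v`: the number of arcs containing `v` in which `v` is
not the last entry. -/
def score {n k : ℕ} (H : Hypertournament n k) (v : Fin n) : ℕ :=
  (H.arcs.filter (fun e => v ∈ e.toFinset ∧ e.getLast? ≠ some v)).card

/-- `s` (on indices `< n`) lists, up to order, the scores of the vertices of some
k-hypertournament. -/
def IsScoreSequence (n k : ℕ) (s : ℕ → ℕ) : Prop :=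
  ∃ (H : Hypertournament n k) (σ : Equiv.Perm (Fin n)),
    ∀ i : Fin n, s i.val = score H (σ i)

section Aux
variable {n k : ℕ}

variable {n k : ℕ}

lemma powersetCard_filter_subset (W : Finset (Fin n)) :
    ((Finset.univ.powersetCard k).filter (fun S => S ⊆ W)) = W.powersetCard k := by
  ext S
  simp [Finset.mem_powersetCard]
  tauto

lemma powersetCard_filter_notmem (v : Fin n) :
    ((Finset.univ.powersetCard k).filter (fun S => v ∉ S)) =
      (Finset.univ.erase v).powersetCard k := by
  ext S
  simp [Finset.mem_powersetCard, Finset.subset_erase]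
  tauto

lemma card_powersetCard_filter_mem (hk : 1 ≤ k) (hn : k ≤ n) (v : Fin n) :
    ((Finset.univ.powersetCard k).filter (fun S => v ∈ S)).card
      = (n - 1).choose (k - 1) := by
  have h1 : ((Finset.univ.powersetCard k).filter (fun S => v ∈ S)).card
      + ((Finset.univ.powersetCard k).filter (fun S => v ∉ S)).card
      = (Finset.univ.powersetCard k (α := Fin n)).card :=
    Finset.card_filter_add_card_filter_not _
  rw [powersetCard_filter_notmem] at h1
  rw [Finset.card_powersetCard, Finset.card_powersetCard, Finset.card_erase_of_mem (Finset.mem_univ v),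
    Finset.card_univ, Fintype.card_fin] at h1
  obtain ⟨m, rfl⟩ : ∃ m, n = m + 1 := ⟨n - 1, by omega⟩
  obtain ⟨l, rfl⟩ : ∃ l, k = l + 1 := ⟨k - 1, by omega⟩
  rw [Nat.choose_succ_succ] at h1
  simpa using h1


variable {n k : ℕ}

lemma card_arcs_filter (H : Hypertournament n k) (P : Finset (Fin n) → Prop) [DecidablePred P] :
    (H.arcs.filter (fun e => P e.toFinset)).card
      = ((Finset.univ.powersetCard k).filter P).card := by
  apply Finset.card_nbij (i := fun e => e.toFinset)
  · intro e he
    rw [Finset.mem_coe, Finset.mem_filter] at he ⊢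
    refine ⟨Finset.mem_powersetCard.2 ⟨Finset.subset_univ _, ?_⟩, he.2⟩
    rw [List.toFinset_card_of_nodup (H.nodup e he.1), H.len e he.1]
  · intro e1 he1 e2 he2 hee
    simp only [Finset.coe_filter, Set.mem_setOf_eq] at he1 he2
    have hcard : e1.toFinset.card = k := by
      rw [List.toFinset_card_of_nodup (H.nodup e1 he1.1), H.len e1 he1.1]
    obtain ⟨e, -, hu⟩ := H.complete e1.toFinset hcard
    rw [hu e1 ⟨he1.1, rfl⟩, hu e2 ⟨he2.1, hee.symm⟩]
  · intro S hS
    simp only [Finset.coe_filter, Set.mem_setOf_eq, Finset.mem_powersetCard] at hS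
    obtain ⟨e, ⟨he, hte⟩, -⟩ := H.complete S hS.1.2
    exact ⟨e, by simp [Finset.mem_filter, he, hte, hS.2], hte⟩

lemma card_arcs (hk : 1 ≤ k) (hn : k ≤ n) (H : Hypertournament n k) :
    H.arcs.card = n.choose k := by
  have := card_arcs_filter H (fun _ => True)
  simp only [Finset.filter_true] at this
  rw [this, Finset.card_powersetCard, Finset.card_univ, Fintype.card_fin]

lemma card_arcs_mem (hk : 1 ≤ k) (hn : k ≤ n) (H : Hypertournament n k) (v : Fin n) :
    (H.arcs.filter (fun e => v ∈ e.toFinset)).card = (n - 1).choose (k - 1) := by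
  rw [card_arcs_filter H (fun S => v ∈ S), card_powersetCard_filter_mem hk hn]

lemma card_arcs_subset (H : Hypertournament n k) (W : Finset (Fin n)) :
    (H.arcs.filter (fun e => e.toFinset ⊆ W)).card = W.card.choose k := by
  rw [card_arcs_filter H (fun S => S ⊆ W), powersetCard_filter_subset, Finset.card_powersetCard]

/-- number of arcs whose last entry is `v` -/
def lastCount {n k : ℕ} (H : Hypertournament n k) (v : Fin n) : ℕ :=
  (H.arcs.filter (fun e => e.getLast? = some v)).card

lemma mem_of_getLast'' {n k : ℕ} (H : Hypertournament n k) {v : Fin n} :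
    ∀ e ∈ H.arcs, e.getLast? = some v → v ∈ e.toFinset := by
  intro e _ hl
  exact List.mem_toFinset.2 (List.mem_of_mem_getLast? (by rw [hl]; rfl))

lemma score_add_lastCount (hk : 1 ≤ k) (hn : k ≤ n) (H : Hypertournament n k) (v : Fin n) :
    score H v + lastCount H v = (n - 1).choose (k - 1) := by
  have h1 : (H.arcs.filter (fun e => v ∈ e.toFinset ∧ e.getLast? ≠ some v)).card
      + (H.arcs.filter (fun e => v ∈ e.toFinset ∧ e.getLast? = some v)).card
      = (H.arcs.filter (fun e => v ∈ e.toFinset)).card := by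
    simp only [ne_eq]
    rw [← Finset.filter_filter, ← Finset.filter_filter]
    have := Finset.card_filter_add_card_filter_not
      (s := H.arcs.filter (fun e => v ∈ e.toFinset)) (p := fun e => e.getLast? = some v)
    omega
  have h2 : (H.arcs.filter (fun e => v ∈ e.toFinset ∧ e.getLast? = some v))
      = H.arcs.filter (fun e => e.getLast? = some v) := by
    ext e
    simp only [Finset.mem_filter]
    exact ⟨fun h => ⟨h.1, h.2.2⟩, fun h => ⟨h.1, mem_of_getLast'' H e h.1 h.2, h.2⟩⟩
  rw [h2, card_arcs_mem hk hn H v] at h1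
  exact h1

lemma sum_lastCount_le (hk : 1 ≤ k) (hn : k ≤ n) (H : Hypertournament n k) (T : Finset (Fin n)) :
    ∑ v ∈ T, lastCount H v + (n - T.card).choose k ≤ n.choose k := by
  have hdisj : ∀ v ∈ T, ∀ w ∈ T, v ≠ w →
      Disjoint (H.arcs.filter (fun e => e.getLast? = some v))
        (H.arcs.filter (fun e => e.getLast? = some w)) := by
    intro v _ w _ hvw
    rw [Finset.disjoint_left]
    intro e h1 h2
    rw [Finset.mem_filter] at h1 h2
    rw [h1.2] at h2
    exact hvw (Option.some.inj h2.2)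
  have hbi : ∑ v ∈ T, lastCount H v
      = (T.biUnion (fun v => H.arcs.filter (fun e => e.getLast? = some v))).card :=
    (Finset.card_biUnion hdisj).symm
  set B := H.arcs.filter (fun e => e.toFinset ⊆ Finset.univ \ T) with hB
  have hBcard : B.card = (n - T.card).choose k := by
    rw [hB, card_arcs_subset, Finset.card_sdiff_of_subset (Finset.subset_univ T), Finset.card_univ,
      Fintype.card_fin]
  have hd2 : Disjoint (T.biUnion (fun v => H.arcs.filter (fun e => e.getLast? = some v))) B := by
    rw [Finset.disjoint_left]
    intro e h1 h2
    rw [Finset.mem_biUnion] at h1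
    obtain ⟨v, hv, he⟩ := h1
    rw [Finset.mem_filter] at he h2
    have := h2.2 (mem_of_getLast'' H e he.1 he.2)
    rw [Finset.mem_sdiff] at this
    exact this.2 hv
  have hsub : (T.biUnion (fun v => H.arcs.filter (fun e => e.getLast? = some v))) ∪ B ⊆ H.arcs := by
    apply Finset.union_subset
    · exact Finset.biUnion_subset.2 fun v _ => Finset.filter_subset _ _
    · exact Finset.filter_subset _ _
  have := Finset.card_le_card hsub
  rw [Finset.card_union_of_disjoint hd2] at this
  rw [card_arcs hk hn H] at this
  omega

lemma sum_lastCount_univ (hk : 1 ≤ k) (hn : k ≤ n) (H : Hypertournament n k) :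
    ∑ v : Fin n, lastCount H v = n.choose k := by
  have hdisj : ∀ v ∈ (Finset.univ : Finset (Fin n)), ∀ w ∈ Finset.univ, v ≠ w →
      Disjoint (H.arcs.filter (fun e => e.getLast? = some v))
        (H.arcs.filter (fun e => e.getLast? = some w)) := by
    intro v _ w _ hvw
    rw [Finset.disjoint_left]
    intro e h1 h2
    rw [Finset.mem_filter] at h1 h2
    rw [h1.2] at h2
    exact hvw (Option.some.inj h2.2)
  simp only [lastCount]
  rw [← Finset.card_biUnion hdisj]
  have : (Finset.univ.biUnion (fun v => H.arcs.filter (fun e => e.getLast? = some v))) = H.arcs := by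
    apply Finset.Subset.antisymm
    · exact Finset.biUnion_subset.2 fun v _ => Finset.filter_subset _ _
    · intro e he
      have hne : e ≠ [] := by
        intro h
        have := H.len e he
        rw [h] at this
        simp at this
        omega
      rw [Finset.mem_biUnion]
      exact ⟨e.getLast hne, Finset.mem_univ _,
        Finset.mem_filter.2 ⟨he, List.getLast?_eq_getLast_of_ne_nil hne⟩⟩
  rw [this, card_arcs hk hn H]

lemma sum_score_T {n k : ℕ} (hk : 1 ≤ k) (hn : k ≤ n) (H : Hypertournament n k)
    (T : Finset (Fin n)) :
    ∑ v ∈ T, score H v + ∑ v ∈ T, lastCount H v = T.card * ((n - 1).choose (k - 1)) := by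
  rw [← Finset.sum_add_distrib,
    Finset.sum_congr rfl (fun v _ => score_add_lastCount hk hn H v),
    Finset.sum_const, smul_eq_mul]

lemma sum_range_to_filter {n : ℕ} (hn0 : 0 < n) (j : ℕ) (hj : j ≤ n) (g : ℕ → ℕ) :
    ∑ i ∈ Finset.range j, g i
      = ∑ x ∈ Finset.univ.filter (fun i : Fin n => i.val < j), g x.val := by
  apply Finset.sum_nbij' (i := fun a => (⟨a % n, Nat.mod_lt a hn0⟩ : Fin n)) (j := Fin.val)
  · intro a ha
    rw [Finset.mem_range] at ha
    simp only [Finset.mem_filter, Finset.mem_univ, true_and]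
    rwa [Nat.mod_eq_of_lt (lt_of_lt_of_le ha hj)]
  · intro a ha
    rw [Finset.mem_filter] at ha
    rw [Finset.mem_range]
    exact ha.2
  · intro a ha
    rw [Finset.mem_range] at ha
    exact Nat.mod_eq_of_lt (lt_of_lt_of_le ha hj)
  · intro a _
    exact Fin.ext (Nat.mod_eq_of_lt a.isLt)
  · intro a ha
    rw [Finset.mem_range] at ha
    exact (congrArg g (Nat.mod_eq_of_lt (lt_of_lt_of_le ha hj))).symm

lemma card_filter_lt {n : ℕ} (j : ℕ) (hj : j ≤ n) :
    (Finset.univ.filter (fun i : Fin n => i.val < j)).card = j := by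
  have h : (Finset.univ.filter (fun i : Fin n => i.val < j)).card = (Finset.range j).card := by
    apply Finset.card_nbij (i := Fin.val)
    · intro a ha
      rw [Finset.mem_coe, Finset.mem_filter] at ha
      rw [Finset.mem_coe, Finset.mem_range]
      exact ha.2
    · exact Fin.val_injective.injOn
    · intro a ha
      simp only [Finset.coe_range, Set.mem_Iio] at ha
      exact ⟨⟨a, lt_of_lt_of_le ha hj⟩, by simp [ha], rfl⟩
  rw [h, Finset.card_range]

lemma forward_dir {n k : ℕ} (hk : 1 < k) (hn : k ≤ n) (s : ℕ → ℕ)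
    (H : Hypertournament n k) (σ : Equiv.Perm (Fin n))
    (hσ : ∀ i : Fin n, s i.val = score H (σ i)) :
    (∀ j, 1 ≤ j → j ≤ n →
          (j : ℤ) * Nat.choose (n - 1) (k - 1) + (Nat.choose (n - j) k : ℤ)
            - (Nat.choose n k : ℤ) ≤ ∑ i ∈ Finset.range j, (s i : ℤ)) ∧
        ∑ i ∈ Finset.range n, (s i : ℤ) =
          (n : ℤ) * Nat.choose (n - 1) (k - 1) + (Nat.choose (n - n) k : ℤ)
            - (Nat.choose n k : ℤ) := by
  have hk1 : 1 ≤ k := le_of_lt hk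
  have hn0 : 0 < n := lt_of_lt_of_le (lt_trans one_pos hk) hn
  -- common setup for j ≤ n
  have key : ∀ j ≤ n,
      ∑ i ∈ Finset.range j, s i
        + ∑ v ∈ Finset.image σ (Finset.univ.filter (fun i : Fin n => i.val < j)), lastCount H v
      = j * ((n - 1).choose (k - 1)) ∧
      (Finset.image σ (Finset.univ.filter (fun i : Fin n => i.val < j))).card = j := by
    intro j hj
    set F := Finset.univ.filter (fun i : Fin n => i.val < j) with hF
    set T := Finset.image σ F with hT
    have hcard : T.card = j := by
      rw [hT, Finset.card_image_of_injective _ σ.injective, card_filter_lt j hj]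
    have hsum : ∑ i ∈ Finset.range j, s i = ∑ v ∈ T, score H v := by
      rw [sum_range_to_filter hn0 j hj s, hT,
        Finset.sum_image (fun a _ b _ h => σ.injective h)]
      exact Finset.sum_congr rfl (fun x _ => hσ x)
    refine ⟨?_, hcard⟩
    rw [hsum, ← hcard]
    exact sum_score_T hk1 hn H T
  constructor
  · intro j hj1 hjn
    obtain ⟨hAB, hTc⟩ := key j hjn
    have hBle := sum_lastCount_le hk1 hn H
      (Finset.image σ (Finset.univ.filter (fun i : Fin n => i.val < j)))
    rw [hTc] at hBle
    have hm : ((j * ((n - 1).choose (k - 1)) : ℕ) : ℤ)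
        = (j : ℤ) * ((n - 1).choose (k - 1) : ℕ) := by push_cast; ring
    rw [← hm, ← Nat.cast_sum]
    omega
  · obtain ⟨hAB, hTc⟩ := key n le_rfl
    have hBeq : ∑ v ∈ Finset.image σ (Finset.univ.filter (fun i : Fin n => i.val < n)),
        lastCount H v = n.choose k := by
      have : Finset.image σ (Finset.univ.filter (fun i : Fin n => i.val < n))
          = Finset.univ := by
        apply Finset.eq_univ_of_card
        rw [Finset.card_image_of_injective _ σ.injective, card_filter_lt n le_rfl,
          Fintype.card_fin]
      rw [this]
      exact sum_lastCount_univ hk1 hn H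
    rw [hBeq] at hAB
    have h0 : (n - n).choose k = 0 := by
      rw [Nat.sub_self]
      exact Nat.choose_eq_zero_of_lt (lt_trans one_pos hk)
    have hm : ((n * ((n - 1).choose (k - 1)) : ℕ) : ℤ)
        = (n : ℤ) * ((n - 1).choose (k - 1) : ℕ) := by push_cast; ring
    rw [← hm, ← Nat.cast_sum, h0]
    omega

lemma strictMono_fin_bound {j n : ℕ} (f : Fin j → Fin n) (hf : StrictMono f)
    (t : Fin j) : (f t).val ≤ n - j + t.val := by
  have aux : ∀ (d : ℕ) (t : Fin j) (h : t.val + d < j), (f t).val + d ≤ (f ⟨t.val + d, h⟩).val := by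
    intro d
    induction d with
    | zero => intro t h; simp
    | succ d ih =>
      intro t h
      have h1 : t.val + d < j := by omega
      have h2 : (⟨t.val + d, h1⟩ : Fin j) < ⟨t.val + d + 1, by omega⟩ := by
        simp [Fin.lt_def]
      have := hf h2
      have := ih t h1
      have : (f ⟨t.val + d, h1⟩).val < (f ⟨t.val + d + 1, by omega⟩).val := by
        exact_mod_cast hf h2
      have heq : (⟨t.val + d + 1, by omega⟩ : Fin j) = ⟨t.val + (d+1), h⟩ := rfl
      rw [heq] at this
      omega
  have hj : t.val < j := t.isLt
  have h1 : t.val + (j - 1 - t.val) < j := by omega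
  have := aux (j - 1 - t.val) t h1
  have h2 : (f ⟨t.val + (j - 1 - t.val), h1⟩).val < n := (f _).isLt
  omega

lemma sum_subset_le_sum_top {n : ℕ} (s : ℕ → ℕ) (hs : ∀ i j, i ≤ j → j < n → s i ≤ s j)
    (W : Finset (Fin n)) :
    ∑ v ∈ W, s v.val ≤ ∑ i ∈ Finset.Ico (n - W.card) n, s i := by
  set j := W.card with hj
  have hjn : j ≤ n := by
    rw [hj]
    calc W.card ≤ (Finset.univ : Finset (Fin n)).card := Finset.card_le_univ W
    _ = n := by rw [Finset.card_univ, Fintype.card_fin]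
  have f : Fin j ↪o Fin n := W.orderEmbOfFin rfl
  have himg : Finset.image (fun t => (W.orderEmbOfFin rfl t : Fin n)) Finset.univ = W := by
    apply Finset.eq_of_subset_of_card_le
    · intro v hv
      rw [Finset.mem_image] at hv
      obtain ⟨t, _, rfl⟩ := hv
      exact Finset.orderEmbOfFin_mem W rfl t
    · rw [Finset.card_image_of_injective _ (W.orderEmbOfFin rfl).injective, Finset.card_univ,
        Fintype.card_fin]
  have h1 : ∑ v ∈ W, s v.val = ∑ t : Fin j, s ((W.orderEmbOfFin rfl t : Fin n)).val := by
    conv_lhs => rw [← himg]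
    rw [Finset.sum_image (fun a _ b _ h => (W.orderEmbOfFin rfl).injective h)]
  have h2 : ∀ t : Fin j, s ((W.orderEmbOfFin rfl t : Fin n)).val ≤ s (n - j + t.val) := by
    intro t
    have hb := strictMono_fin_bound _ (W.orderEmbOfFin rfl).strictMono t
    exact hs _ _ hb (by omega)
  have h3 : ∑ t : Fin j, s ((W.orderEmbOfFin rfl t : Fin n)).val
      ≤ ∑ t : Fin j, s (n - j + t.val) :=
    Finset.sum_le_sum (fun t _ => h2 t)
  have h4 : ∑ t : Fin j, s (n - j + t.val) = ∑ i ∈ Finset.Ico (n - j) n, s i := by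
    rw [Finset.sum_Ico_eq_sum_range]
    have : n - (n - j) = j := by omega
    rw [this, ← Fin.sum_univ_eq_sum_range (fun i => s (n - j + i)) j]
  omega

section Backward

variable {n k : ℕ}

lemma top_bound (hk : 1 < k) (hn : k ≤ n) (s : ℕ → ℕ)
    (hs : ∀ i j, i ≤ j → j < n → s i ≤ s j)
    (h1 : ∀ j, 1 ≤ j → j ≤ n →
          (j : ℤ) * Nat.choose (n - 1) (k - 1) + (Nat.choose (n - j) k : ℤ)
            - (Nat.choose n k : ℤ) ≤ ∑ i ∈ Finset.range j, (s i : ℤ))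
    (h2 : ∑ i ∈ Finset.range n, (s i : ℤ) =
          (n : ℤ) * Nat.choose (n - 1) (k - 1) + (Nat.choose (n - n) k : ℤ)
            - (Nat.choose n k : ℤ)) :
    ∀ i, i < n → s i ≤ (n - 1).choose (k - 1) := by
  have hn2 : 2 ≤ n := le_trans hk hn
  have hCh1 : Nat.choose 1 k = 0 := Nat.choose_eq_zero_of_lt hk
  have hCh0 : Nat.choose (n - n) k = 0 := by
    rw [Nat.sub_self]; exact Nat.choose_eq_zero_of_lt (by omega)
  have e1 := h1 (n - 1) (by omega) (by omega)
  rw [show n - (n - 1) = 1 by omega, hCh1] at e1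
  rw [hCh0] at h2
  have hss : ∑ i ∈ Finset.range n, (s i : ℤ)
      = ∑ i ∈ Finset.range (n - 1), (s i : ℤ) + (s (n - 1) : ℤ) := by
    obtain ⟨m, hm⟩ : ∃ m, n = m + 1 := ⟨n - 1, by omega⟩
    rw [hm, Finset.sum_range_succ]
    simp
  have hcast : ((n - 1 : ℕ) : ℤ) = (n : ℤ) - 1 := by
    push_cast [Nat.cast_sub (by omega : 1 ≤ n)]; ring
  rw [hcast] at e1
  have hkey : (s (n - 1) : ℤ) ≤ ((n - 1).choose (k - 1) : ℤ) := by
    have hring : ((n : ℤ) - 1) * ((n - 1).choose (k - 1) : ℤ)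
        + ((n - 1).choose (k - 1) : ℤ) = (n : ℤ) * ((n - 1).choose (k - 1) : ℤ) := by ring
    push_cast at e1 h2 ⊢
    linarith [e1, h2, hss, hring]
  intro i hi
  have : s i ≤ s (n - 1) := by
    rcases eq_or_lt_of_le (Nat.le_of_lt_succ (by omega : i < (n-1)+1)) with h | h
    · rw [h]
    · exact hs i (n - 1) (by omega) (by omega)
  exact le_trans this (by exact_mod_cast hkey)

lemma subset_bound (hk : 1 < k) (hn : k ≤ n) (s : ℕ → ℕ)
    (hs : ∀ i j, i ≤ j → j < n → s i ≤ s j)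
    (h1 : ∀ j, 1 ≤ j → j ≤ n →
          (j : ℤ) * Nat.choose (n - 1) (k - 1) + (Nat.choose (n - j) k : ℤ)
            - (Nat.choose n k : ℤ) ≤ ∑ i ∈ Finset.range j, (s i : ℤ))
    (h2 : ∑ i ∈ Finset.range n, (s i : ℤ) =
          (n : ℤ) * Nat.choose (n - 1) (k - 1) + (Nat.choose (n - n) k : ℤ)
            - (Nat.choose n k : ℤ)) :
    ∀ W : Finset (Fin n),
      (W.card.choose k : ℤ) + ∑ v ∈ W, (s v.val : ℤ)
        ≤ (W.card : ℤ) * (n - 1).choose (k - 1) := by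
  intro W
  set j := W.card with hjdef
  clear_value j
  have hjn : j ≤ n := by
    rw [hjdef]
    calc W.card ≤ (Finset.univ : Finset (Fin n)).card := Finset.card_le_univ W
    _ = n := by rw [Finset.card_univ, Fintype.card_fin]
  have hCh0 : Nat.choose (n - n) k = 0 := by
    rw [Nat.sub_self]; exact Nat.choose_eq_zero_of_lt (by omega)
  rw [hCh0] at h2
  have hIco : ∑ v ∈ W, (s v.val : ℤ) ≤ ∑ i ∈ Finset.Ico (n - j) n, (s i : ℤ) := by
    have := sum_subset_le_sum_top s hs W
    rw [← hjdef] at this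
    have hc1 : ∑ v ∈ W, (s v.val : ℤ) = ((∑ v ∈ W, s v.val : ℕ) : ℤ) := by push_cast; rfl
    have hc2 : ∑ i ∈ Finset.Ico (n - j) n, (s i : ℤ)
        = ((∑ i ∈ Finset.Ico (n - j) n, s i : ℕ) : ℤ) := by push_cast; rfl
    rw [hc1, hc2]
    exact_mod_cast this
  have hsub : ∑ i ∈ Finset.Ico (n - j) n, (s i : ℤ)
      = ∑ i ∈ Finset.range n, (s i : ℤ) - ∑ i ∈ Finset.range (n - j), (s i : ℤ) := by
    rw [Finset.sum_Ico_eq_sub _ (by omega : n - j ≤ n)]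
  have hrange : ∑ i ∈ Finset.range (n - j), (s i : ℤ)
      ≥ ((n - j : ℕ) : ℤ) * (n - 1).choose (k - 1) + (j.choose k : ℤ) - (n.choose k : ℤ) := by
    rcases Nat.eq_zero_or_pos (n - j) with h0 | hpos
    · have hjn' : j = n := by omega
      simp only [h0, hjn', Finset.range_zero, Finset.sum_empty]
      simp
    · have := h1 (n - j) hpos (by omega)
      rw [show n - (n - j) = j by omega] at this
      linarith [this]
  have hcast : ((n - j : ℕ) : ℤ) = (n : ℤ) - (j : ℤ) := by
    push_cast [Nat.cast_sub hjn]; ring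
  rw [hcast] at hrange
  have hring : ((n : ℤ) - j) * ((n - 1).choose (k - 1) : ℤ)
      + (j : ℤ) * ((n - 1).choose (k - 1) : ℤ)
      = (n : ℤ) * ((n - 1).choose (k - 1) : ℤ) := by ring
  clear hring hcast hCh0 h1 hs
  generalize hS : (∑ v ∈ W, (s v.val : ℤ)) = S at hIco ⊢
  generalize hI : (∑ i ∈ Finset.Ico (n - j) n, (s i : ℤ)) = I at hIco hsub
  generalize hR : (∑ i ∈ Finset.range n, (s i : ℤ)) = R at hsub h2
  generalize hQ : (∑ i ∈ Finset.range (n - j), (s i : ℤ)) = Q at hsub hrange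
  generalize hC : ((Nat.choose (n - 1) (k - 1) : ℕ) : ℤ) = C at hrange h2 ⊢
  ring_nf at hrange h2 ⊢
  linarith

end Backward

lemma backward_dir {n k : ℕ} (hk : 1 < k) (hn : k ≤ n) (s : ℕ → ℕ)
    (hs : ∀ i j, i ≤ j → j < n → s i ≤ s j)
    (h1 : ∀ j, 1 ≤ j → j ≤ n →
          (j : ℤ) * Nat.choose (n - 1) (k - 1) + (Nat.choose (n - j) k : ℤ)
            - (Nat.choose n k : ℤ) ≤ ∑ i ∈ Finset.range j, (s i : ℤ))
    (h2 : ∑ i ∈ Finset.range n, (s i : ℤ) =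
          (n : ℤ) * Nat.choose (n - 1) (k - 1) + (Nat.choose (n - n) k : ℤ)
            - (Nat.choose n k : ℤ)) :
    IsScoreSequence n k s := by
  classical
  have hk1 : 1 ≤ k := le_of_lt hk
  have hn0 : 0 < n := by omega
  have hsC : ∀ i, i < n → s i ≤ (n - 1).choose (k - 1) := top_bound hk hn s hs h1 h2
  set C' := (n - 1).choose (k - 1) with hC'
  set r : Fin n → ℕ := fun v => C' - s v.val with hr
  have hrs : ∀ v : Fin n, r v + s v.val = C' := fun v => Nat.sub_add_cancel (hsC v.val v.isLt)
  set 𝒦 := (Finset.univ : Finset (Fin n)).powersetCard k with h𝒦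
  have hcardK : ∀ S : {S // S ∈ 𝒦}, S.val.card = k :=
    fun S => (Finset.mem_powersetCard.1 S.2).2
  set t : {S // S ∈ 𝒦} → Finset (Fin n × ℕ) :=
    fun S => S.val.biUnion (fun v => {v} ×ˢ Finset.range (r v)) with ht
  have hmemt : ∀ (S : {S // S ∈ 𝒦}) (p : Fin n × ℕ),
      p ∈ t S ↔ p.1 ∈ S.val ∧ p.2 < r p.1 := by
    intro S p
    simp only [ht, Finset.mem_biUnion, Finset.mem_product, Finset.mem_singleton,
      Finset.mem_range]
    constructor
    · rintro ⟨v, hv, h1', h2'⟩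
      subst h1'
      exact ⟨hv, h2'⟩
    · rintro ⟨hv, hc⟩
      exact ⟨p.1, hv, rfl, hc⟩
  -- Hall's condition
  have hall : ∀ 𝒜 : Finset {S // S ∈ 𝒦}, 𝒜.card ≤ (𝒜.biUnion t).card := by
    intro 𝒜
    set W := 𝒜.biUnion (fun S => S.val) with hW
    have hbu : 𝒜.biUnion t = W.biUnion (fun v => {v} ×ˢ Finset.range (r v)) := by
      ext p
      simp only [Finset.mem_biUnion, hW]
      constructor
      · rintro ⟨S, hS, hp⟩
        rw [hmemt S p] at hp
        refine ⟨p.1, ⟨S, hS, hp.1⟩, ?_⟩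
        rw [Finset.mem_product]
        exact ⟨Finset.mem_singleton_self _, Finset.mem_range.2 hp.2⟩
      · rintro ⟨v, ⟨S, hS, hv⟩, hp⟩
        simp only [Finset.mem_product, Finset.mem_singleton, Finset.mem_range] at hp
        refine ⟨S, hS, ?_⟩
        rw [hmemt S p]
        obtain ⟨hp1, hp2⟩ := hp
        rw [← hp1] at hv hp2
        exact ⟨hv, hp2⟩
    have hdisj : ∀ v ∈ W, ∀ w ∈ W, v ≠ w →
        Disjoint ({v} ×ˢ Finset.range (r v)) ({w} ×ˢ Finset.range (r w)) := by
      intro v _ w _ hvw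
      rw [Finset.disjoint_left]
      intro p hp hq
      simp only [Finset.mem_product, Finset.mem_singleton] at hp hq
      exact hvw (hp.1 ▸ hq.1 ▸ rfl)
    have hcardbu : (𝒜.biUnion t).card = ∑ v ∈ W, r v := by
      rw [hbu, Finset.card_biUnion hdisj]
      apply Finset.sum_congr rfl
      intro v _
      rw [Finset.card_product, Finset.card_singleton, Finset.card_range, one_mul]
    have hA1 : 𝒜.card ≤ W.card.choose k := by
      rw [← Finset.card_powersetCard k W]
      apply Finset.card_le_card_of_injOn (fun S => S.val)
      · intro S hS
        rw [Finset.mem_coe, Finset.mem_powersetCard]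
        refine ⟨?_, hcardK S⟩
        intro x hx
        rw [hW, Finset.mem_biUnion]
        exact ⟨S, hS, hx⟩
      · intro S1 _ S2 _ h
        exact Subtype.ext h
    have hA2 : W.card.choose k ≤ ∑ v ∈ W, r v := by
      have hZ := subset_bound hk hn s hs h1 h2 W
      have hN : W.card.choose k + ∑ v ∈ W, s v.val ≤ W.card * C' := by
        have : ((W.card.choose k + ∑ v ∈ W, s v.val : ℕ) : ℤ) ≤ ((W.card * C' : ℕ) : ℤ) := by
          push_cast
          push_cast at hZ
          exact hZ
        exact_mod_cast this
      have hsum : ∑ v ∈ W, r v + ∑ v ∈ W, s v.val = W.card * C' := by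
        rw [← Finset.sum_add_distrib, Finset.sum_congr rfl (fun v _ => hrs v),
          Finset.sum_const, smul_eq_mul]
      omega
    omega
  obtain ⟨f, hfinj, hf⟩ := (Finset.all_card_le_biUnion_card_iff_exists_injective t).1 hall
  have hfmem : ∀ S, (f S).1 ∈ S.val ∧ (f S).2 < r (f S).1 :=
    fun S => (hmemt S (f S)).1 (hf S)
  -- fiber counts
  set A : Fin n → Finset {S // S ∈ 𝒦} :=
    fun v => 𝒦.attach.filter (fun S => (f S).1 = v) with hA
  have hAle : ∀ v, (A v).card ≤ r v := by
    intro v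
    rw [← Finset.card_range (r v)]
    apply Finset.card_le_card_of_injOn (fun S => (f S).2)
    · intro S hS
      rw [hA] at hS
      simp only [Finset.mem_coe, Finset.mem_filter] at hS
      rw [Finset.mem_coe, Finset.mem_range]
      have := (hfmem S).2
      rwa [hS.2] at this
    · intro S1 hS1 S2 hS2 heq
      rw [hA] at hS1 hS2
      simp only [Finset.mem_coe, Finset.mem_filter] at hS1 hS2
      apply hfinj
      apply Prod.ext
      · rw [hS1.2, hS2.2]
      · exact heq
  have hKcard : 𝒦.attach.card = n.choose k := by
    rw [Finset.card_attach, h𝒦, Finset.card_powersetCard, Finset.card_univ, Fintype.card_fin]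
  have hsumA : ∑ v : Fin n, (A v).card = n.choose k := by
    rw [← hKcard]
    exact (Finset.card_eq_sum_card_fiberwise
      (f := fun S => (f S).1) (t := Finset.univ) (fun S _ => Finset.mem_univ _)).symm
  have hrsum : ∑ v : Fin n, r v = n.choose k := by
    have hCh0 : Nat.choose (n - n) k = 0 := by
      rw [Nat.sub_self]; exact Nat.choose_eq_zero_of_lt (by omega)
    rw [hCh0] at h2
    have hss : ∑ i ∈ Finset.range n, s i + n.choose k = n * C' := by
      have : ((∑ i ∈ Finset.range n, s i + n.choose k : ℕ) : ℤ) = ((n * C' : ℕ) : ℤ) := by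
        push_cast
        push_cast at h2
        linarith
      exact_mod_cast this
    have hsv : ∑ v : Fin n, s v.val = ∑ i ∈ Finset.range n, s i :=
      Fin.sum_univ_eq_sum_range (fun i => s i) n
    have hsum : ∑ v : Fin n, r v + ∑ v : Fin n, s v.val = n * C' := by
      rw [← Finset.sum_add_distrib, Finset.sum_congr rfl (fun v _ => hrs v),
        Finset.sum_const, Finset.card_univ, Fintype.card_fin, smul_eq_mul]
    omega
  have hAeq : ∀ v : Fin n, (A v).card = r v := by
    have := (Finset.sum_eq_sum_iff_of_le (fun (i : Fin n) _ => hAle i)).1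
      (by rw [hsumA, hrsum])
    intro v
    exact this v (Finset.mem_univ v)
  -- construct the hypertournament
  set chosen : {S // S ∈ 𝒦} → Fin n := fun S => (f S).1 with hchosen
  have hcmem : ∀ S, chosen S ∈ S.val := fun S => (hfmem S).1
  set arcOf : {S // S ∈ 𝒦} → List (Fin n) :=
    fun S => (S.val.erase (chosen S)).sort (· ≤ ·) ++ [chosen S] with harcOf
  have htoF : ∀ S, (arcOf S).toFinset = S.val := by
    intro S
    rw [harcOf]
    simp only [List.toFinset_append, Finset.sort_toFinset, List.toFinset_cons,
      List.toFinset_nil, LawfulSingleton.insert_empty_eq]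
    rw [Finset.union_comm, ← Finset.insert_eq, Finset.insert_erase (hcmem S)]
  have hlast : ∀ S, (arcOf S).getLast? = some (chosen S) := fun S => List.getLast?_concat
  have hlen : ∀ S, (arcOf S).length = k := by
    intro S
    rw [harcOf]
    simp only [List.length_append, Finset.length_sort, List.length_cons, List.length_nil]
    rw [Finset.card_erase_of_mem (hcmem S), hcardK S]
    omega
  have hnd : ∀ S, (arcOf S).Nodup := by
    intro S
    rw [harcOf, List.nodup_append]
    refine ⟨Finset.sort_nodup _ _, List.nodup_singleton _, ?_⟩
    intro a ha b hb hab
    rw [List.mem_singleton] at hb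
    subst hb
    subst hab
    rw [Finset.mem_sort] at ha
    exact Finset.notMem_erase _ _ ha
  have hinj : ∀ S1 S2 : {S // S ∈ 𝒦}, arcOf S1 = arcOf S2 → S1 = S2 := by
    intro S1 S2 h
    apply Subtype.ext
    rw [← htoF S1, ← htoF S2, h]
  set H : Hypertournament n k := {
    arcs := 𝒦.attach.image arcOf
    nodup := by
      intro e he
      rw [Finset.mem_image] at he
      obtain ⟨S, _, rfl⟩ := he
      exact hnd S
    len := by
      intro e he
      rw [Finset.mem_image] at he
      obtain ⟨S, _, rfl⟩ := he
      exact hlen S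
    complete := by
      intro S hS
      have hSmem : S ∈ 𝒦 := Finset.mem_powersetCard.2 ⟨Finset.subset_univ _, hS⟩
      refine ⟨arcOf ⟨S, hSmem⟩,
        ⟨Finset.mem_image_of_mem _ (Finset.mem_attach _ _), htoF _⟩, ?_⟩
      rintro e ⟨hemem, hetoF⟩
      rw [Finset.mem_image] at hemem
      obtain ⟨S', _, rfl⟩ := hemem
      have : S' = ⟨S, hSmem⟩ := Subtype.ext (by rw [← htoF S', hetoF])
      rw [this] } with hH
  have hscore : ∀ v, score H v = s v.val := by
    intro v
    have hcount : score H v = (𝒦.attach.filter (fun S => v ∈ S.val ∧ chosen S ≠ v)).card := by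
      rw [score]
      symm
      apply Finset.card_nbij (i := arcOf)
      · intro S hS
        rw [Finset.mem_coe, Finset.mem_filter] at hS ⊢
        refine ⟨Finset.mem_image_of_mem _ (Finset.mem_attach _ _), ?_, ?_⟩
        · rw [htoF S]; exact hS.2.1
        · rw [hlast S]
          simp only [ne_eq, Option.some.injEq]
          exact hS.2.2
      · intro S1 _ S2 _ h
        exact hinj S1 S2 h
      · intro e he
        simp only [Finset.coe_filter, Set.mem_setOf_eq] at he
        obtain ⟨hemem, hp⟩ := he
        rw [Finset.mem_image] at hemem
        obtain ⟨S', hS', rfl⟩ := hemem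
        refine ⟨S', ?_, rfl⟩
        simp only [Finset.coe_filter, Set.mem_setOf_eq]
        refine ⟨Finset.mem_attach _ _, ?_, ?_⟩
        · rw [← htoF S']; exact hp.1
        · intro hc
          apply hp.2
          rw [hlast S', hc]
    have hsplit : (𝒦.attach.filter (fun S => v ∈ S.val ∧ chosen S ≠ v)).card
        + (𝒦.attach.filter (fun S => v ∈ S.val ∧ chosen S = v)).card
        = (𝒦.attach.filter (fun S => v ∈ S.val)).card := by
      simp only [ne_eq]
      rw [← Finset.filter_filter, ← Finset.filter_filter]
      have := Finset.card_filter_add_card_filter_not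
        (s := 𝒦.attach.filter (fun S => v ∈ S.val)) (p := fun S => chosen S = v)
      omega
    have hval : (𝒦.attach.filter (fun S => v ∈ S.val ∧ chosen S = v)) = A v := by
      ext S
      rw [hA, Finset.mem_filter, Finset.mem_filter]
      constructor
      · rintro ⟨h, _, hc⟩
        exact ⟨h, hc⟩
      · rintro ⟨h, hc⟩
        exact ⟨h, hc ▸ hcmem S, hc⟩
    have hmemcount : (𝒦.attach.filter (fun S => v ∈ S.val)).card = C' := by
      have : (𝒦.attach.filter (fun S => v ∈ S.val)).card
          = (𝒦.filter (fun S => v ∈ S)).card := by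
        apply Finset.card_nbij (i := fun S => S.val)
        · intro S hS
          rw [Finset.mem_coe, Finset.mem_filter] at hS ⊢
          exact ⟨S.2, hS.2⟩
        · intro S1 _ S2 _ h
          exact Subtype.ext h
        · intro S hS
          simp only [Finset.coe_filter, Set.mem_setOf_eq] at hS ⊢
          exact ⟨⟨S, hS.1⟩, ⟨Finset.mem_attach _ _, hS.2⟩, rfl⟩
      rw [this, h𝒦, card_powersetCard_filter_mem hk1 hn v]
    have e1 := hrs v
    have e2 := hAeq v
    have e3 : (𝒦.attach.filter (fun S => v ∈ S.val ∧ chosen S = v)).card = (A v).card := by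
      rw [hval]
    omega
  exact ⟨H, Equiv.refl _, fun i => (hscore i).symm⟩


end Aux


/-- Theorem 1.2 (Zhou, Yao, Zhang): a non-decreasing sequence `s 0, …, s (n-1)` of
non-negative integers is a score sequence of some k-hypertournament iff
`∑_{i<j} s i ≥ j·C(n-1,k-1) + C(n-j,k) - C(n,k)` for all `1 ≤ j ≤ n`,
with equality when `j = n`. -/
theorem score_sequence_iff (n k : ℕ) (hk : 1 < k) (hn : k ≤ n)
    (s : ℕ → ℕ) (hs : ∀ i j, i ≤ j → j < n → s i ≤ s j) :
    IsScoreSequence n k s ↔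
      ((∀ j, 1 ≤ j → j ≤ n →
          (j : ℤ) * Nat.choose (n - 1) (k - 1) + (Nat.choose (n - j) k : ℤ)
            - (Nat.choose n k : ℤ) ≤ ∑ i ∈ Finset.range j, (s i : ℤ)) ∧
        ∑ i ∈ Finset.range n, (s i : ℤ) =
          (n : ℤ) * Nat.choose (n - 1) (k - 1) + (Nat.choose (n - n) k : ℤ)
            - (Nat.choose n k : ℤ)) := by
  constructor
  · rintro ⟨H, σ, hσ⟩
    exact forward_dir hk hn s H σ hσ
  · rintro ⟨h1, h2⟩
    exact backward_dir hk hn s hs h1 h2
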